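/- Let F be a field of characteristic ≠ 2, g2, g3 ∈ F, r(x) = 4x³ − g2·x − g3, and H(u,v,a) = (uv + au + av + g2/4)² − (4auv − g3)(u+v+a). Let u, v, a, U, V ∈ F with U² = r(u), V² = r(v), and u ≠ v. Then H(u,v,a) = (u−v)²·[ (1/4)·((U−V)/(u−v))² − (u+v+a) ]·[ (1/4)·((U+V)/(u−v))² − (u+v+a) ]. -/

import Mathlib

/-- Factorised form of the triquadratic `H(u,v,a)` in terms of square roots
`U, V` of `r(u), r(v)`. -/
theorem triquadratic_factorisation {F : Type*} [Field F] (h2 : (2 : F) ≠ 0)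
    (g2 g3 u v a U V : F)
    (hU : U ^ 2 = 4 * u ^ 3 - g2 * u - g3)
    (hV : V ^ 2 = 4 * v ^ 3 - g2 * v - g3)
    (huv : u ≠ v) :
    (u * v + a * u + a * v + g2 / 4) ^ 2 -
      (4 * a * u * v - g3) * (u + v + a) =
    (u - v) ^ 2 *
      ((1 / 4) * ((U - V) / (u - v)) ^ 2 - (u + v + a)) *
      ((1 / 4) * ((U + V) / (u - v)) ^ 2 - (u + v + a)) := by
  have hd : u - v ≠ 0 := sub_ne_zero.mpr huv
  have h4 : (4 : F) ≠ 0 := by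
    have h := mul_ne_zero h2 h2
    norm_num at h ⊢
    exact h
  obtain ⟨d, hdd⟩ : ∃ d, d = u - v := ⟨u - v, rfl⟩
  rw [← hdd] at hd ⊢
  field_simp
  subst hdd
  linear_combination
    (-(U^2-V^2+(4*u^3-g2*u-g3)-(4*v^3-g2*v-g3)-8*(u+v+a)*(u-v)^2)) * hU
    + (U^2-V^2+(4*u^3-g2*u-g3)-(4*v^3-g2*v-g3)+8*(u+v+a)*(u-v)^2) * hV
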